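/- Let α ≥ 2 and R > 0 be real numbers, let u, t be points of ℝ² with t ≠ u and dist(t,u) ≤ D for some D > 0, and let S be a finite set of points of ℝ² with u ∉ S such that for every integer q ≥ 1 the number of points v ∈ S with dist(v,u) < 2qR is at most 8(q−1). Then Σ_{v∈S} dist(v,u)^{−α} ≤ 8·(2R)^{−α}·Σ_{q=1}^∞ q^{−α}, and consequently, if S is nonempty, dist(t,u)^{−α} / Σ_{v∈S} dist(v,u)^{−α} ≥ (2R/D)^α / (8·Σ_{q=1}^∞ q^{−α}). -/

import Mathlib

lemma aux_sum_div8 (g : ℕ → ℝ) (m : ℕ) :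
    ∑ i ∈ Finset.range (8 * m), g (i / 8) = 8 * ∑ q ∈ Finset.range m, g q := by
  induction m with
  | zero => simp
  | succ m ih =>
    have h8 : 8 * (m + 1) = (8 * m) + 1 + 1 + 1 + 1 + 1 + 1 + 1 + 1 := by ring
    rw [h8, Finset.sum_range_succ, Finset.sum_range_succ, Finset.sum_range_succ,
      Finset.sum_range_succ, Finset.sum_range_succ, Finset.sum_range_succ,
      Finset.sum_range_succ, Finset.sum_range_succ, ih, Finset.sum_range_succ]
    rw [show (8*m)/8 = m by omega, show (8*m+1)/8 = m by omega, show (8*m+1+1)/8 = m by omega,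
      show (8*m+1+1+1)/8 = m by omega, show (8*m+1+1+1+1)/8 = m by omega,
      show (8*m+1+1+1+1+1)/8 = m by omega, show (8*m+1+1+1+1+1+1)/8 = m by omega,
      show (8*m+1+1+1+1+1+1+1)/8 = m by omega]
    ring

/-- Deterministic interference bound: if every open ball of radius `2qR`
around the receiver `u` contains at most `8(q-1)` interferers of the finite set `S`
(so in particular no interferer is within distance `2R`), then the total interference
`Σ_{v∈S} dist(v,u)^{-α}` is at most `8·(2R)^{-α}·Σ_{q≥1} q^{-α}`; consequently, if `S` is
nonempty and the transmitter `t ≠ u` is within distance `D` of `u`, the SIR is at least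
`(2R/D)^α / (8·Σ_{q≥1} q^{-α})`. -/
theorem stmt_8 (α R D : ℝ) (hα : 2 ≤ α) (hR : 0 < R) (hD : 0 < D)
    (u t : EuclideanSpace ℝ (Fin 2)) (ht : t ≠ u) (htu : dist t u ≤ D)
    (S : Finset (EuclideanSpace ℝ (Fin 2))) (huS : u ∉ S)
    (hS : ∀ q : ℕ, 1 ≤ q →
      (S.filter (fun v => dist v u < 2 * q * R)).card ≤ 8 * (q - 1)) :
    (∑ v ∈ S, dist v u ^ (-α)) ≤
        8 * (2 * R) ^ (-α) * ∑' q : ℕ, ((q + 1 : ℕ) : ℝ) ^ (-α) ∧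
      (S.Nonempty →
        (2 * R / D) ^ α / (8 * ∑' q : ℕ, ((q + 1 : ℕ) : ℝ) ^ (-α)) ≤
          dist t u ^ (-α) / ∑ v ∈ S, dist v u ^ (-α)) := by
  classical
  set g : ℕ → ℝ := fun q => ((q + 1 : ℕ) : ℝ) ^ (-α) with hg
  have hgnn : ∀ q, 0 ≤ g q := fun q => Real.rpow_nonneg (by positivity) _
  have hsummable : Summable g := by
    have h1 : Summable (fun n : ℕ => (n : ℝ) ^ (-α)) :=
      Real.summable_nat_rpow.mpr (by linarith)
    have := (summable_nat_add_iff 1).mpr h1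
    simpa [hg] using this
  set T : ℝ := ∑' q : ℕ, g q with hT
  have hTpos : 0 < T := by
    refine Summable.tsum_pos hsummable hgnn 0 ?_
    simp [hg]
  set L : List ℝ := Multiset.sort (S.val.map (fun v => dist v u)) (· ≤ ·) with hL
  have hsorted : L.Pairwise (· ≤ ·) := Multiset.pairwise_sort _ _
  have hcoe : (L : Multiset ℝ) = S.val.map (fun v => dist v u) := Multiset.sort_eq _ _
  -- key per-index bound
  have hkey : ∀ i : Fin L.length, 2 * (((i : ℕ) / 8 + 1 : ℕ) : ℝ) * R ≤ L.get i := by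
    intro i
    by_contra hcon
    push_neg at hcon
    set q : ℕ := (i : ℕ) / 8 + 1 with hq
    have hcard := hS q (Nat.le_add_left _ _)
    have h1 : (S.filter (fun v => dist v u < 2 * q * R)).card
        = L.countP (fun x => decide (x < 2 * q * R)) := by
      rw [← Multiset.coe_countP, hcoe, Multiset.countP_map]
      rfl
    have h2 : (i : ℕ) + 1 ≤ L.countP (fun x => decide (x < 2 * q * R)) := by
      have htd := List.take_append_drop ((i : ℕ) + 1) L
      have hlen : (L.take ((i : ℕ) + 1)).length = (i : ℕ) + 1 := by
        rw [List.length_take]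
        exact Nat.min_eq_left i.2
      have hall : ∀ a ∈ L.take ((i : ℕ) + 1), (fun x => decide (x < 2 * q * R)) a = true := by
        intro a ha
        obtain ⟨j, hj, hja⟩ := List.mem_take_iff_getElem.mp ha
        have hjlen : j < L.length := lt_of_lt_of_le hj (min_le_right _ _)
        have hji : j ≤ (i : ℕ) := by
          have := lt_of_lt_of_le hj (min_le_left _ _); omega
        have hle : L.get ⟨j, hjlen⟩ ≤ L.get i :=
          hsorted.rel_get_of_le (by rw [Fin.mk_le_mk]; exact hji)
        simp only [decide_eq_true_eq]
        rw [← hja]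
        calc L[j] = L.get ⟨j, hjlen⟩ := rfl
          _ ≤ L.get i := hle
          _ < 2 * q * R := hcon
      have hcp := List.countP_append (p := fun x => decide (x < 2 * q * R))
        (l₁ := L.take ((i : ℕ) + 1)) (l₂ := L.drop ((i : ℕ) + 1))
      rw [htd] at hcp
      rw [hcp, List.countP_eq_length.mpr hall, hlen]
      exact Nat.le_add_right _ _
    omega
  -- rewrite the sum as a sum over indices of L
  have hsum_eq : ∑ v ∈ S, dist v u ^ (-α) = ∑ i : Fin L.length, L.get i ^ (-α) := by
    have h1 : (List.ofFn (fun i : Fin L.length => L.get i ^ (-α)))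
        = L.map (fun x => x ^ (-α)) := by
      simpa using List.ofFn_getElem_eq_map L (fun x => x ^ (-α))
    rw [← List.sum_ofFn, h1, ← Multiset.sum_coe, ← Multiset.map_coe, hcoe, Multiset.map_map]
    rfl
  -- termwise bound
  have hterm : ∀ i : Fin L.length, L.get i ^ (-α) ≤ (2 * R) ^ (-α) * g ((i : ℕ) / 8) := by
    intro i
    have hpos : (0 : ℝ) < 2 * (((i : ℕ) / 8 + 1 : ℕ) : ℝ) * R := by positivity
    calc L.get i ^ (-α) ≤ (2 * (((i : ℕ) / 8 + 1 : ℕ) : ℝ) * R) ^ (-α) :=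
          Real.rpow_le_rpow_of_nonpos hpos (hkey i) (by linarith)
      _ = (2 * R) ^ (-α) * g ((i : ℕ) / 8) := by
          rw [hg, show (2 : ℝ) * (((i : ℕ) / 8 + 1 : ℕ) : ℝ) * R
              = (2 * R) * (((i : ℕ) / 8 + 1 : ℕ) : ℝ) by ring,
            Real.mul_rpow (by positivity) (by positivity)]
  -- the main bound
  have hmain : ∑ v ∈ S, dist v u ^ (-α) ≤ 8 * (2 * R) ^ (-α) * T := by
    have hrpnn : (0 : ℝ) ≤ (2 * R) ^ (-α) := Real.rpow_nonneg (by positivity) _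
    have hsub : ∑ i ∈ Finset.range L.length, g (i / 8)
        ≤ ∑ i ∈ Finset.range (8 * L.length), g (i / 8) :=
      Finset.sum_le_sum_of_subset_of_nonneg
        (Finset.range_subset_range.mpr (by omega)) (fun i _ _ => hgnn _)
    have hts : ∑ q ∈ Finset.range L.length, g q ≤ T :=
      Summable.sum_le_tsum (Finset.range L.length) (fun i _ => hgnn i) hsummable
    calc ∑ v ∈ S, dist v u ^ (-α) = ∑ i : Fin L.length, L.get i ^ (-α) := hsum_eq
      _ ≤ ∑ i : Fin L.length, (2 * R) ^ (-α) * g ((i : ℕ) / 8) :=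
          Finset.sum_le_sum (fun i _ => hterm i)
      _ = (2 * R) ^ (-α) * ∑ i ∈ Finset.range L.length, g (i / 8) := by
          rw [← Finset.mul_sum, ← Fin.sum_univ_eq_sum_range (fun i => g (i / 8)) L.length]
      _ ≤ (2 * R) ^ (-α) * (8 * T) := by
          refine mul_le_mul_of_nonneg_left ?_ hrpnn
          calc ∑ i ∈ Finset.range L.length, g (i / 8)
              ≤ ∑ i ∈ Finset.range (8 * L.length), g (i / 8) := hsub
            _ = 8 * ∑ q ∈ Finset.range L.length, g q := aux_sum_div8 g L.length
            _ ≤ 8 * T := by linarith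
      _ = 8 * (2 * R) ^ (-α) * T := by ring
  refine ⟨hmain, fun hne => ?_⟩
  have hApos : 0 < ∑ v ∈ S, dist v u ^ (-α) := by
    refine Finset.sum_pos (fun v hv => Real.rpow_pos_of_pos ?_ _) hne
    exact dist_pos.mpr (by rintro rfl; exact huS hv)
  have hdtu : 0 < dist t u := dist_pos.mpr ht
  have hnum : D ^ (-α) ≤ dist t u ^ (-α) :=
    Real.rpow_le_rpow_of_nonpos hdtu htu (by linarith)
  have heq : (2 * R / D) ^ α / (8 * T) = D ^ (-α) / (8 * (2 * R) ^ (-α) * T) := by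
    have h1 : (0 : ℝ) < (2 * R) ^ α := Real.rpow_pos_of_pos (by positivity) _
    have h2 : (0 : ℝ) < D ^ α := Real.rpow_pos_of_pos hD _
    rw [Real.div_rpow (by positivity) hD.le, Real.rpow_neg hD.le,
      Real.rpow_neg (by positivity : (0 : ℝ) ≤ 2 * R)]
    field_simp
  rw [heq]
  exact div_le_div₀ (Real.rpow_nonneg dist_nonneg _) hnum hApos hmain
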